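/- Let A be a finite-dimensional simple algebra over a field F with char(F) ≠ 2. If an element c ∈ A satisfies cx² ∈ [A,A] for every x ∈ A, then c = 0. -/

import Mathlib

open Module LinearMap

section Aux

variable {K B M : Type*} [Field K] [Ring B] [Algebra K B]
  [AddCommGroup M] [Module B M] [Module K M] [IsScalarTower K B M]

theorem aux_smulCommClass : SMulCommClass K B M := by
  constructor
  intro k b m
  have h1 : b • k • m = b • (k • (1 : B)) • m := by rw [smul_assoc, one_smul]
  rw [h1, ← mul_smul, mul_smul_comm, ← smul_mul_assoc, mul_one, smul_assoc]

theorem aux_schur [IsAlgClosed K] [FiniteDimensional K M] [IsSimpleModule B M]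
    (f : M →ₗ[B] M) : ∃ a : K, ∀ m : M, f m = a • m := by
  haveI := aux_smulCommClass (K := K) (B := B) (M := M)
  haveI : Nontrivial M := IsSimpleModule.nontrivial B M
  let f' : M →ₗ[K] M := f.restrictScalars K
  obtain ⟨a, ha⟩ := Module.End.exists_eigenvalue f'
  obtain ⟨m, hm⟩ := ha.exists_hasEigenvector
  have hmem : f' m = a • m := hm.apply_eq_smul
  by_cases hg : f - a • (LinearMap.id : M →ₗ[B] M) = 0
  · exact ⟨a, fun x => by
      have := congrFun (congrArg DFunLike.coe hg) x
      simpa [sub_eq_zero] using this⟩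
  · exfalso
    have hinj := LinearMap.injective_of_ne_zero hg
    have h0 : (f - a • (LinearMap.id : M →ₗ[B] M)) m = 0 := by
      simp only [LinearMap.sub_apply, LinearMap.smul_apply, LinearMap.id_apply]
      rw [show f m = f' m from rfl, hmem, sub_self]
    exact hm.2 (hinj (by simpa using h0))

/-- The orbit of a basis under the action of `B` is everything (density step). -/
theorem aux_orbit_top [IsAlgClosed K] [FiniteDimensional K M] [IsSimpleModule B M]
    (n : ℕ) (e : Basis (Fin n) K M) :
    LinearMap.range (LinearMap.pi fun i => LinearMap.toSpanSingleton B M (e i)) = ⊤ := by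
  set γ := LinearMap.pi fun i => LinearMap.toSpanSingleton B M (e i) with hγ
  haveI : IsSemisimpleModule B (Fin n → M) := by
    refine isSemisimpleModule_of_isSemisimpleModule_submodule'
      (p := fun i => LinearMap.range (LinearMap.single B (fun _ : Fin n => M) i)) ?_ ?_
    · intro i; exact IsSemisimpleModule.range _
    · exact LinearMap.iSup_range_single B _
  by_contra hW
  set W := LinearMap.range γ with hWdef
  obtain ⟨C, hC⟩ := exists_isCompl W
  have hCne : C ≠ ⊥ := by
    rintro rfl
    exact hW (by simpa using hC.symm.sup_eq_top)
  obtain ⟨S, hSC, hSsimple⟩ := (IsSemisimpleModule.eq_bot_or_exists_simple_le C).resolve_left hCne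
  have hSW : Disjoint S W := Disjoint.mono_left hSC hC.symm.disjoint
  obtain ⟨c₀, hc₀⟩ := exists_isCompl (S ⊔ W)
  have hcompl : IsCompl S (c₀ ⊔ W) := by
    constructor
    · rw [Submodule.disjoint_def]
      intro x hxS hxc
      rw [Submodule.mem_sup] at hxc
      obtain ⟨cc, hcc, w, hw, rfl⟩ := hxc
      have h1 : cc ∈ (S ⊔ W) ⊓ c₀ := ⟨by
        have : cc = (cc + w) - w := by abel
        rw [this]
        exact Submodule.sub_mem _ (Submodule.mem_sup_left hxS) (Submodule.mem_sup_right hw), hcc⟩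
      rw [hc₀.inf_eq_bot] at h1
      rw [h1, zero_add] at hxS ⊢
      have : w ∈ S ⊓ W := ⟨hxS, hw⟩
      rwa [hSW.eq_bot] at this
    · rw [codisjoint_iff]
      rw [show S ⊔ (c₀ ⊔ W) = (S ⊔ W) ⊔ c₀ by rw [sup_comm c₀ W, ← sup_assoc]]
      exact hc₀.sup_eq_top
  set π := Submodule.linearProjOfIsCompl S (c₀ ⊔ W) hcompl with hπ
  have hπW : ∀ x ∈ W, π x = 0 := fun x hx =>
    Submodule.linearProjOfIsCompl_apply_right hcompl ⟨x, Submodule.mem_sup_right hx⟩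
  set g : Fin n → (M →ₗ[B] S) := fun i => π ∘ₗ LinearMap.single B (fun _ : Fin n => M) i with hg
  have hdecomp : ∀ x : Fin n → M, π x = ∑ i, g i (x i) := by
    intro x
    conv_lhs => rw [← Finset.univ_sum_single x, map_sum]
    rfl
  have hex : ∃ i, g i ≠ 0 := by
    by_contra hall
    push_neg at hall
    haveI := IsSimpleModule.nontrivial B S
    obtain ⟨s, hs⟩ := exists_ne (0 : S)
    have : π (s : Fin n → M) = s := Submodule.linearProjOfIsCompl_apply_left hcompl s
    rw [hdecomp] at this
    simp only [hall, LinearMap.zero_apply] at this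
    exact hs (by
      apply_fun (Submodule.subtype S)
      · simpa using this.symm
      · exact Subtype.val_injective)
  obtain ⟨i₀, hi₀⟩ := hex
  haveI : IsSimpleModule B S := hSsimple
  have hbij := LinearMap.bijective_of_ne_zero hi₀
  let E : M ≃ₗ[B] S := LinearEquiv.ofBijective (g i₀) hbij
  have hlam : ∀ i, ∃ a : K, ∀ m : M, (E.symm : S →ₗ[B] M) ((g i) m) = a • m := fun i =>
    aux_schur ((E.symm : S →ₗ[B] M) ∘ₗ (g i))
  choose lam hlamspec using hlam
  have hrel : ∑ i, lam i • e i = 0 := by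
    have h1 : π (γ 1) = 0 := hπW _ (LinearMap.mem_range_self γ 1)
    rw [hdecomp] at h1
    have h2 : (E.symm : S →ₗ[B] M) (∑ i, g i (γ 1 i)) = 0 := by rw [h1, map_zero]
    rw [map_sum] at h2
    have h3 : ∀ i, γ 1 i = e i := by
      intro i; simp [γ, LinearMap.toSpanSingleton, LinearMap.pi_apply]
    calc ∑ i, lam i • e i = ∑ i, (E.symm : S →ₗ[B] M) (g i (e i)) := by
          refine Finset.sum_congr rfl fun i _ => ?_
          rw [hlamspec i (e i)]
        _ = 0 := by rw [← h2]; exact Finset.sum_congr rfl fun i _ => by rw [h3]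
  have hlam1 : lam i₀ = 1 := by
    haveI : Nontrivial M := IsSimpleModule.nontrivial B M
    obtain ⟨m, hm⟩ := exists_ne (0 : M)
    have hsp := hlamspec i₀ m
    rw [show (E.symm : S →ₗ[B] M) ((g i₀) m) = m from E.symm_apply_apply m] at hsp
    by_contra hne
    have h0 : (lam i₀ - 1) • m = 0 := by rw [sub_smul, one_smul, ← hsp, sub_self]
    exact hm (by
      have h4 := congrArg (fun z => (lam i₀ - 1)⁻¹ • z) h0
      simpa [smul_smul, inv_mul_cancel₀ (sub_ne_zero.mpr hne)] using h4)
  have hli := e.linearIndependent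
  rw [Fintype.linearIndependent_iff] at hli
  have := hli lam hrel i₀
  rw [hlam1] at this
  exact one_ne_zero this

end Aux

/-- In a nontrivial finite-dimensional algebra over an algebraically closed field, the
span of commutators is a proper subspace. -/
theorem aux_span_commutators_ne_top (K B : Type*) [Field K] [IsAlgClosed K] [Ring B]
    [Algebra K B] [FiniteDimensional K B] [Nontrivial B] :
    Submodule.span K {z : B | ∃ u v : B, z = u * v - v * u} ≠ ⊤ := by
  intro htop
  -- a maximal left ideal
  haveI : IsCoatomic (Submodule B B) := by
    apply CompleteLattice.coatomic_of_top_compact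
    have h := Submodule.singleton_span_isCompactElement (1 : B) (R := B) (M := B)
    rwa [show Submodule.span B {(1 : B)} = ⊤ from Ideal.span_singleton_one] at h
  obtain ⟨N, hN, -⟩ := (eq_top_or_exists_le_coatom (⊥ : Submodule B B)).resolve_left bot_ne_top
  haveI hsimple : IsSimpleModule B (B ⧸ N) := isSimpleModule_iff_isCoatom.mpr hN
  set M := B ⧸ N with hM
  haveI : FiniteDimensional K M := by
    refine Module.Finite.of_surjective
      (⟨⟨N.mkQ, fun a b => map_add _ a b⟩, fun k b => ?_⟩ : B →ₗ[K] M)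
      (Submodule.mkQ_surjective N)
    show N.mkQ (k • b) = k • N.mkQ b
    rw [← algebraMap_smul B k b, map_smul, algebraMap_smul]
  haveI := aux_smulCommClass (K := K) (B := B) (M := M)
  haveI : SMulCommClass B K M := SMulCommClass.symm K B M
  haveI : Nontrivial M := IsSimpleModule.nontrivial B M
  -- the representation and the trace functional
  let ρ : B →ₐ[K] Module.End K M := Algebra.lsmul K K M
  let φ : B →ₗ[K] K := (LinearMap.trace K M).comp ρ.toLinearMap
  have hφ0 : ∀ x : B, φ x = 0 := by
    intro x
    have hx : x ∈ Submodule.span K {z : B | ∃ u v : B, z = u * v - v * u} := by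
      rw [htop]; trivial
    induction hx using Submodule.span_induction with
    | mem z hz =>
        obtain ⟨u, v, rfl⟩ := hz
        show LinearMap.trace K M (ρ (u * v - v * u)) = 0
        rw [map_sub, map_mul, map_mul, map_sub, LinearMap.trace_mul_comm, sub_self]
    | zero => simp
    | add a b _ _ ha hb => rw [map_add, ha, hb, add_zero]
    | smul k a _ ha => rw [map_smul, ha, smul_zero]
  -- an endomorphism of trace one
  have hn : 0 < finrank K M := finrank_pos
  let e : Basis (Fin (finrank K M)) K M := Module.finBasis K M
  let i₀ : Fin (finrank K M) := ⟨0, hn⟩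
  let f : M →ₗ[K] M := (LinearMap.toMatrix e e).symm (Matrix.single i₀ i₀ 1)
  have htr : LinearMap.trace K M f = 1 := by
    rw [LinearMap.trace_eq_matrix_trace K e, LinearEquiv.apply_symm_apply,
      Matrix.trace_single_eq_same]
  -- density : some b acts as f
  have horb := aux_orbit_top (K := K) (B := B) (M := M) (finrank K M) e
  have hmem : (fun i => f (e i)) ∈
      LinearMap.range (LinearMap.pi fun i => LinearMap.toSpanSingleton B M (e i)) := by
    rw [horb]; trivial
  obtain ⟨b, hb⟩ := hmem
  have hρb : ρ b = f := by
    apply e.ext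
    intro i
    have : b • e i = f (e i) := congrFun hb i
    simpa [ρ] using this
  have : φ b = 1 := by
    show LinearMap.trace K M (ρ b) = 1
    rw [hρb, htr]
  rw [hφ0 b] at this
  exact zero_ne_one this

/-- Let `A` be a finite-dimensional simple algebra over a field `F` with `char F ≠ 2`.
If `c ∈ A` satisfies `c * x ^ 2 ∈ [A,A]` for every `x ∈ A`, then `c = 0`. -/
theorem eq_zero_of_mul_sq_mem_commutator_span (F A : Type*) [Field F] [Ring A] [Algebra F A]
    [FiniteDimensional F A] [IsSimpleRing A] (h2 : (2 : F) ≠ 0) (c : A)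
    (h : ∀ x : A, c * x ^ 2 ∈ Submodule.span F {z : A | ∃ u v : A, z = u * v - v * u}) :
    c = 0 := by
  by_contra hc
  set S := Submodule.span F {z : A | ∃ u v : A, z = u * v - v * u} with hS
  have hcomm : ∀ u v : A, u * v - v * u ∈ S := fun u v => Submodule.subset_span ⟨u, v, rfl⟩
  -- Step 1 : c * x ∈ S for all x
  have step1 : ∀ x : A, c * x ∈ S := by
    intro x
    have key : c * x + c * x ∈ S := by
      have hid : c * (x + 1) ^ 2 - c * x ^ 2 - c * 1 ^ 2 = c * x + c * x := by
        simp only [pow_two, mul_add, add_mul, mul_one, one_mul]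
        abel
      rw [← hid]
      exact Submodule.sub_mem _ (Submodule.sub_mem _ (h (x + 1)) (h x)) (h 1)
    have hsm := Submodule.smul_mem S ((2 : F)⁻¹) key
    rwa [show (2 : F)⁻¹ • (c * x + c * x) = c * x by
      rw [show c * x + c * x = (2 : F) • (c * x) from (two_smul F (c * x)).symm, smul_smul,
        inv_mul_cancel₀ h2, one_smul]] at hsm
  -- Step 2 : a * c * x ∈ S for all a x
  have step2 : ∀ a x : A, a * c * x ∈ S := by
    intro a x
    have h1 : a * (c * x) - (c * x) * a ∈ S := hcomm a (c * x)
    have h2' : c * (x * a) ∈ S := step1 (x * a)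
    have hid : a * c * x = (a * (c * x) - (c * x) * a) + c * (x * a) := by
      rw [sub_add, mul_assoc c x a, sub_self, sub_zero, mul_assoc]
    rw [hid]
    exact Submodule.add_mem _ h1 h2'
  -- The two-sided ideal generated by c is contained in S ; by simplicity S = ⊤
  set J0 := Submodule.span F {z : A | ∃ a b : A, z = a * c * b} with hJ0
  have hJ0S : J0 ≤ S := by
    rw [hJ0, Submodule.span_le]
    rintro z ⟨a, b, rfl⟩
    exact step2 a b
  have hmull : ∀ (u : A) {z : A}, z ∈ J0 → u * z ∈ J0 := by
    intro u z hz
    induction hz using Submodule.span_induction with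
    | mem w hw =>
        obtain ⟨a, b, rfl⟩ := hw
        exact Submodule.subset_span ⟨u * a, b, by rw [mul_assoc, mul_assoc, mul_assoc]⟩
    | zero => simpa using Submodule.zero_mem J0
    | add a b _ _ ha hb => rw [mul_add]; exact Submodule.add_mem _ ha hb
    | smul k a _ ha => rw [Algebra.mul_smul_comm]; exact Submodule.smul_mem _ _ ha
  have hmulr : ∀ (u : A) {z : A}, z ∈ J0 → z * u ∈ J0 := by
    intro u z hz
    induction hz using Submodule.span_induction with
    | mem w hw =>
        obtain ⟨a, b, rfl⟩ := hw
        exact Submodule.subset_span ⟨a, b * u, by rw [mul_assoc, mul_assoc]⟩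
    | zero => simpa using Submodule.zero_mem J0
    | add a b _ _ ha hb => rw [add_mul]; exact Submodule.add_mem _ ha hb
    | smul k a _ ha => rw [Algebra.smul_mul_assoc]; exact Submodule.smul_mem _ _ ha
  let J : TwoSidedIdeal A := TwoSidedIdeal.mk' (J0 : Set A) (Submodule.zero_mem J0)
    (fun ha hb => Submodule.add_mem J0 ha hb) (fun ha => Submodule.neg_mem J0 ha)
    (fun {x y} hy => hmull x hy) (fun {x y} hx => hmulr y hx)
  have hcJ : c ∈ J := by
    rw [TwoSidedIdeal.mem_mk']
    exact Submodule.subset_span ⟨1, 1, by rw [one_mul, mul_one]⟩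
  have hJne : J ≠ ⊥ := by
    intro hbot
    rw [hbot, TwoSidedIdeal.mem_bot] at hcJ
    exact hc hcJ
  have hJtop : J = ⊤ := (IsSimpleRing.simple.eq_bot_or_eq_top J).resolve_left hJne
  have hStop : S = ⊤ := by
    rw [eq_top_iff]
    intro x _
    apply hJ0S
    have : x ∈ J := hJtop ▸ trivial
    rwa [TwoSidedIdeal.mem_mk'] at this
  -- Base change to the algebraic closure
  let K := AlgebraicClosure F
  let B := TensorProduct F K A
  haveI : Nontrivial A := inferInstance
  haveI : Nontrivial B := by
    have hfr : finrank K B = finrank F A := Module.finrank_baseChange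
    have : 0 < finrank K B := by rw [hfr]; exact finrank_pos
    exact Module.nontrivial_of_finrank_pos this
  have hBtop : Submodule.span K {z : B | ∃ u v : B, z = u * v - v * u} = ⊤ := by
    set SB := Submodule.span K {z : B | ∃ u v : B, z = u * v - v * u} with hSB
    rw [eq_top_iff]
    rintro x -
    have hx : x ∈ (⊤ : Submodule F B) := trivial
    rw [← TensorProduct.span_tmul_eq_top F K A] at hx
    have : x ∈ SB.restrictScalars F := by
      induction hx using Submodule.span_induction with
      | mem z hz =>
          obtain ⟨k, a, rfl⟩ := hz
          have ha : a ∈ S := hStop ▸ trivial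
          show (k ⊗ₜ[F] a : B) ∈ SB.restrictScalars F
          induction ha using Submodule.span_induction with
          | mem w hw =>
              obtain ⟨u, v, rfl⟩ := hw
              have hcb : (k ⊗ₜ[F] (u * v - v * u) : B) =
                  (k ⊗ₜ[F] u) * (1 ⊗ₜ[F] v) - (1 ⊗ₜ[F] v) * (k ⊗ₜ[F] u) := by
                rw [TensorProduct.tmul_sub, Algebra.TensorProduct.tmul_mul_tmul,
                  Algebra.TensorProduct.tmul_mul_tmul, mul_one, one_mul]
              rw [hcb]
              exact Submodule.subset_span ⟨_, _, rfl⟩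
          | zero => simpa [TensorProduct.tmul_zero] using Submodule.zero_mem (SB.restrictScalars F)
          | add a b _ _ ha hb =>
              rw [TensorProduct.tmul_add]
              exact Submodule.add_mem _ ha hb
          | smul r a _ ha =>
              rw [TensorProduct.tmul_smul]
              exact Submodule.smul_mem _ _ ha
      | zero => exact Submodule.zero_mem _
      | add a b _ _ ha hb => exact Submodule.add_mem _ ha hb
      | smul r a _ ha => exact Submodule.smul_mem _ _ ha
    exact this
  exact aux_span_commutators_ne_top K B hBtop
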